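/- Let σ_R² > 0, let σ₁², σ₂² ≥ 0 with σ₂² ≥ σ₁², and let m₁, m' > 0 with m' ≥ m₁. Then (1/2)·log((σ_R² + σ₂²/m')/(σ_R² + σ₂²/m₁)) + (1/2)·log((σ_R² + σ₁²/m₁)/(σ_R² + σ₁²/m')) ≤ 0. -/
import Mathlib


open Real

theorem highlow_cycle_relax_entropy_nonpos
    (σR2 σ1 σ2 m₁ m' : ℝ)
    (hσR2 : 0 < σR2) (hσ1 : 0 ≤ σ1) (hσ2 : 0 ≤ σ2) (h12 : σ1 ≤ σ2)
    (hm₁ : 0 < m₁) (hm' : 0 < m') (hmm : m₁ ≤ m') :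
    (1 / 2) * Real.log ((σR2 + σ2 / m') / (σR2 + σ2 / m₁)) +
      (1 / 2) * Real.log ((σR2 + σ1 / m₁) / (σR2 + σ1 / m')) ≤ 0 := by
  have hA' : 0 < σR2 + σ2 / m' := by positivity
  have hA1 : 0 < σR2 + σ2 / m₁ := by positivity
  have hB1 : 0 < σR2 + σ1 / m₁ := by positivity
  have hB' : 0 < σR2 + σ1 / m' := by positivity
  have key : (σR2 + σ2 / m') * (σR2 + σ1 / m₁) ≤ (σR2 + σ2 / m₁) * (σR2 + σ1 / m') := by
    have h1 : (1:ℝ)/m' ≤ 1/m₁ := one_div_le_one_div_of_le hm₁ hmm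
    have h : 0 ≤ σR2 * ((σ2 - σ1) * (1/m₁ - 1/m')) :=
      mul_nonneg hσR2.le (mul_nonneg (by linarith) (by linarith))
    have e2' : σ2 / m' = σ2 * (1/m') := by ring
    have e21 : σ2 / m₁ = σ2 * (1/m₁) := by ring
    have e1' : σ1 / m' = σ1 * (1/m') := by ring
    have e11 : σ1 / m₁ = σ1 * (1/m₁) := by ring
    rw [e2', e21, e1', e11]
    nlinarith [h]
  have hlog : Real.log ((σR2 + σ2 / m') * (σR2 + σ1 / m₁)) ≤
      Real.log ((σR2 + σ2 / m₁) * (σR2 + σ1 / m')) :=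
    Real.log_le_log (by positivity) key
  rw [Real.log_mul (ne_of_gt hA') (ne_of_gt hB1),
      Real.log_mul (ne_of_gt hA1) (ne_of_gt hB')] at hlog
  rw [Real.log_div (ne_of_gt hA') (ne_of_gt hA1),
      Real.log_div (ne_of_gt hB1) (ne_of_gt hB')]
  linarith
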